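/- Let G be a TSO game of group II, i.e. both players are permitted to update buffer messages exactly before their own moves, let c_0 be a configuration, and let G' be the finite game whose configurations are those configurations of G whose total buffer content has at most max{1, |B(c_0)|} messages, with the restricted transition relation and restricted final set. Then for each player, c_0 is winning for that player in G if and only if c_0 is winning for that player in G'. -/

import Mathlib

namespace TSOGames

/-- The data of a (safety) game: a partition of the configurations into those of
player A (`isA`) and those of player B, a transition relation, and final configurations. -/
structure SGame (C : Type*) where
  isA : C → Prop
  step : C → C → Prop
  final : C → Prop

namespace SGame

variable {C : Type*} (G : SGame C)

/-- The transition relation alternates between the two players' configurations. -/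
def Alternating : Prop := ∀ c c', G.step c c' → (G.isA c ↔ ¬ G.isA c')

/-- Every configuration has at least one successor. -/
def DeadlockFree : Prop := ∀ c, ∃ c', G.step c c'

/-- Final configurations belong to player A. -/
def FinalInA : Prop := ∀ c, G.final c → G.isA c

/-- An (infinite) play: consecutive configurations are related by `step`. -/
def IsPlay (ρ : ℕ → C) : Prop := ∀ i, G.step (ρ i) (ρ (i + 1))

/-- A (history-dependent) strategy `σ`, given the strict history and the current
configuration, chooses a successor; it is valid for the player owning the
configurations satisfying `own` if it always chooses an actual successor. -/
def ValidStrat (own : C → Prop) (σ : List C → C → C) : Prop :=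
  ∀ h c, own c → G.step c (σ h c)

/-- A play is consistent with the strategy `σ` of the player owning the
configurations satisfying `own` if at every such configuration the play follows `σ`. -/
def Consistent (own : C → Prop) (σ : List C → C → C) (ρ : ℕ → C) : Prop :=
  ∀ i, own (ρ i) → ρ (i + 1) = σ (List.ofFn fun j : Fin i => ρ j) (ρ i)

/-- A play is winning for player B if it visits a final configuration. -/
def BWins (ρ : ℕ → C) : Prop := ∃ i, G.final (ρ i)

/-- A play is winning for player A if it never visits a final configuration. -/
def AWinsPlay (ρ : ℕ → C) : Prop := ¬ G.BWins ρ

/-- `σ` is a winning strategy from `c0` for the player owning the configurations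
satisfying `own`, whose plays are winning when they satisfy `winPlay`:
it is valid and every play from `c0` consistent with it is winning. -/
def WinningStrat (own : C → Prop) (winPlay : (ℕ → C) → Prop)
    (σ : List C → C → C) (c0 : C) : Prop :=
  G.ValidStrat own σ ∧
    ∀ ρ : ℕ → C, ρ 0 = c0 → G.IsPlay ρ → Consistent own σ ρ → winPlay ρ

/-- The given player has a winning strategy from `c0`. -/
def Wins (own : C → Prop) (winPlay : (ℕ → C) → Prop) (c0 : C) : Prop :=
  ∃ σ, G.WinningStrat own winPlay σ c0

/-- `c0` is winning for player A. -/
def WinA (c0 : C) : Prop := G.Wins (fun c => G.isA c) G.AWinsPlay c0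

/-- `c0` is winning for player B. -/
def WinB (c0 : C) : Prop := G.Wins (fun c => ¬ G.isA c) G.BWins c0

end SGame

/-- Restriction of a game to a subset `D` of its configurations. -/
def restrictGame {C : Type*} (G : SGame C) (D : Set C) : SGame C where
  isA := G.isA
  step := fun c c' => G.step c c' ∧ c ∈ D ∧ c' ∈ D
  final := fun c => G.final c ∧ c ∈ D

/-- The winning condition on plays for the player encoded by `b` (`true` = player A,
who wins a play iff it avoids the final configurations; `false` = player B). -/
def winPlayOf {C : Type*} (G : SGame C) (b : Bool) : (ℕ → C) → Prop :=
  fun ρ => if b then ¬ G.BWins ρ else G.BWins ρ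

end TSOGames
namespace TSOGames

/-- TSO instructions: read, write, skip, and memory fence. -/
inductive Instr (X V : Type*) : Type _
  | read (x : X) (v : V)
  | write (x : X) (v : V)
  | skip
  | fence

/-- Whether an instruction is a read instruction. -/
def Instr.isRead {X V : Type*} : Instr X V → Bool
  | .read _ _ => true
  | _ => false

/-- A concurrent program: a family of processes indexed by `I`, each a transition
system over local states `S` labeled by instructions over variables `X` and values `V`. -/
structure Program (I S X V : Type*) where
  delta : I → S → Instr X V → S → Prop

/-- A TSO configuration: local states, per-process FIFO store buffers
(newest message at the head, oldest at the end), and the shared memory. -/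
structure Conf (I S X V : Type*) where
  st : I → S
  buf : I → List (X × V)
  mem : X → V

section TSO

variable {I S X V : Type*}

/-- The value of the most recent buffered write on `x`, if any
(the buffer stores the newest message first). -/
def bufVal [DecidableEq X] : List (X × V) → X → Option V
  | [], _ => none
  | (y, v) :: rest, x => if y = x then some v else bufVal rest x

/-- The value process `ι` reads from variable `x`: the most recent buffered write of
`ι` on `x` if there is one, and the memory value otherwise. -/
def readVal [DecidableEq X] (c : Conf I S X V) (ι : I) (x : X) : V :=
  (bufVal (c.buf ι) x).getD (c.mem x)

variable [DecidableEq I] [DecidableEq X]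

/-- Execution of one instruction by process `ι` under TSO semantics. -/
inductive InstrStep (P : Program I S X V) (ι : I) (instr : Instr X V) :
    Conf I S X V → Conf I S X V → Prop
  | read (c : Conf I S X V) (x : X) (v : V) (s' : S) :
      instr = Instr.read x v → P.delta ι (c.st ι) (Instr.read x v) s' →
      readVal c ι x = v →
      InstrStep P ι instr c ⟨Function.update c.st ι s', c.buf, c.mem⟩
  | write (c : Conf I S X V) (x : X) (v : V) (s' : S) :
      instr = Instr.write x v → P.delta ι (c.st ι) (Instr.write x v) s' →
      InstrStep P ι instr c
        ⟨Function.update c.st ι s', Function.update c.buf ι ((x, v) :: c.buf ι), c.mem⟩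
  | skip (c : Conf I S X V) (s' : S) :
      instr = Instr.skip → P.delta ι (c.st ι) Instr.skip s' →
      InstrStep P ι instr c ⟨Function.update c.st ι s', c.buf, c.mem⟩
  | fence (c : Conf I S X V) (s' : S) :
      instr = Instr.fence → P.delta ι (c.st ι) Instr.fence s' → c.buf ι = [] →
      InstrStep P ι instr c ⟨Function.update c.st ι s', c.buf, c.mem⟩

/-- An update step: the oldest buffered message of some process is committed to memory. -/
inductive UpdStep : Conf I S X V → Conf I S X V → Prop
  | mk (c : Conf I S X V) (ι : I) (x : X) (v : V) (w : List (X × V)) :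
      c.buf ι = w ++ [(x, v)] →
      UpdStep c ⟨c.st, Function.update c.buf ι w, Function.update c.mem x v⟩

/-- Finitely many update steps. -/
def Upds : Conf I S X V → Conf I S X V → Prop := Relation.ReflTransGen UpdStep

/-- `flush` maps every configuration `c` to the configuration `c̄` obtained by
updating all buffered messages to the memory: `c →up* c̄` and all buffers of `c̄` are empty. -/
def IsFlush (flush : Conf I S X V → Conf I S X V) : Prop :=
  ∀ c, Upds c (flush c) ∧ ∀ ι, (flush c).buf ι = []

/-- Update steps by a player, if she is allowed to perform them (otherwise nothing happens). -/
def OptUpds (allowed : Bool) (c c' : Conf I S X V) : Prop :=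
  if allowed then Upds c c' else c' = c

/-- A move of a player whose permissions to update before resp. after her move are
given by `perm`: optional updates before, one instruction, optional updates after. -/
def Move (P : Program I S X V) (perm : Bool × Bool) (c c' : Conf I S X V) : Prop :=
  ∃ c1 c2, OptUpds perm.1 c c1 ∧ (∃ ι instr, InstrStep P ι instr c1 c2) ∧
    OptUpds perm.2 c2 c'

/-- The TSO game induced by a program `P`, update permissions
`permA`/`permB` = (may update before her move, may update after her move)
for players A and B, and a set `SF` of final local states. Game configurations are
TSO configurations annotated by `true` (player A's) or `false` (player B's). -/
def tsoGame (P : Program I S X V) (permA permB : Bool × Bool) (SF : Set S) :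
    SGame (Conf I S X V × Bool) where
  isA := fun c => c.2 = true
  step := fun c c' =>
    (c.2 = true ∧ c'.2 = false ∧ Move P permA c.1 c'.1) ∨
    (c.2 = false ∧ c'.2 = true ∧ Move P permB c.1 c'.1)
  final := fun c => c.2 = true ∧ ∃ ι, c.1.st ι ∈ SF

/-- The configurations owned by the player encoded by `b` (`true` = player A). -/
def ownOf (b : Bool) : Conf I S X V × Bool → Prop := fun c => c.2 = b

/-- The total number of buffered messages of a configuration. -/
def totalBuf [Fintype I] (c : Conf I S X V) : ℕ := ∑ ι, (c.buf ι).length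

end TSO

end TSOGames
namespace TSOGames

section Generic

universe u
variable {C : Type u}

/-- Ordinal-indexed attractor for player "B" (the reachability player). -/
noncomputable def attrAt (H : SGame C) (pA pB : C → Prop) : Ordinal.{u} → C → Prop :=
  WellFounded.fix Ordinal.lt_wf
    (fun o ih c =>
      H.final c ∨
        (pB c ∧ ∃ c', H.step c c' ∧ ∃ o', ∃ h : o' < o, ih o' h c') ∨
        (pA c ∧ ∀ c', H.step c c' → ∃ o', ∃ h : o' < o, ih o' h c'))

theorem attrAt_iff (H : SGame C) (pA pB : C → Prop) (o : Ordinal.{u}) (c : C) :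
    attrAt H pA pB o c ↔
      H.final c ∨
        (pB c ∧ ∃ c', H.step c c' ∧ ∃ o' < o, attrAt H pA pB o' c') ∨
        (pA c ∧ ∀ c', H.step c c' → ∃ o' < o, attrAt H pA pB o' c') := by
  unfold attrAt
  rw [WellFounded.fix_eq]
  simp only [exists_prop]

/-- B-attractor: some ordinal level. -/
def BAt (H : SGame C) (pA pB : C → Prop) (c : C) : Prop := ∃ o, attrAt H pA pB o c

noncomputable def rnk (H : SGame C) (pA pB : C → Prop) (c : C) : Ordinal.{u} :=
  sInf {o | attrAt H pA pB o c}

variable {H : SGame C} {pA pB : C → Prop}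

theorem BAt.attr_rnk {c : C} (h : BAt H pA pB c) : attrAt H pA pB (rnk H pA pB c) c :=
  csInf_mem h

theorem rnk_le {c : C} {o : Ordinal.{u}} (h : attrAt H pA pB o c) : rnk H pA pB c ≤ o :=
  csInf_le' h

theorem BAt_of_final {c : C} (h : H.final c) : BAt H pA pB c :=
  ⟨0, (attrAt_iff H pA pB 0 c).2 (Or.inl h)⟩

theorem BAt_stepB {c c' : C} (hB : pB c) (hs : H.step c c') (h : BAt H pA pB c') :
    BAt H pA pB c :=
  ⟨Order.succ (rnk H pA pB c'),
    (attrAt_iff ..).2 <| Or.inr <| Or.inl ⟨hB, c', hs, _, Order.lt_succ _, h.attr_rnk⟩⟩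

theorem BAt_stepA {c : C} (hA : pA c) (h : ∀ c', H.step c c' → BAt H pA pB c') :
    BAt H pA pB c := by
  refine ⟨Order.succ (⨆ x : {c' // H.step c c'}, rnk H pA pB x.1),
    (attrAt_iff ..).2 <| Or.inr <| Or.inr ⟨hA, fun c' hs =>
      ⟨rnk H pA pB c', ?_, (h c' hs).attr_rnk⟩⟩⟩
  exact lt_of_le_of_lt (Ordinal.le_iSup _ (⟨c', hs⟩ : {c' // H.step c c'}))
    (Order.lt_succ _)

theorem BAt.cases {c : C} (h : BAt H pA pB c) :
    H.final c ∨
      (pB c ∧ ∃ c', H.step c c' ∧ BAt H pA pB c' ∧ rnk H pA pB c' < rnk H pA pB c) ∨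
      (pA c ∧ ∀ c', H.step c c' →
        BAt H pA pB c' ∧ rnk H pA pB c' < rnk H pA pB c) := by
  have h2 := h.attr_rnk
  rw [attrAt_iff] at h2
  rcases h2 with hf | ⟨hB, c', hs, o', ho', ha⟩ | ⟨hA, hall⟩
  · exact Or.inl hf
  · exact Or.inr (Or.inl ⟨hB, c', hs, ⟨o', ha⟩, lt_of_le_of_lt (rnk_le ha) ho'⟩)
  · refine Or.inr (Or.inr ⟨hA, fun c' hs => ?_⟩)
    obtain ⟨o', ho', ha⟩ := hall c' hs
    exact ⟨⟨o', ha⟩, lt_of_le_of_lt (rnk_le ha) ho'⟩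

theorem no_ordinal_descent (g : ℕ → Ordinal.{u}) (h : ∀ i, g (i + 1) < g i) : False := by
  obtain ⟨k, hk⟩ := Ordinal.lt_wf.min_mem (Set.range g) ⟨g 0, 0, rfl⟩
  exact Ordinal.lt_wf.not_lt_min (Set.range g) ⟨k + 1, rfl⟩ (hk ▸ h k)

/-- A play built from a "next configuration" function that may consult the history. -/
noncomputable def histSeq (F : List C → C → C) (c0 : C) : ℕ → List C × C
  | 0 => ([], c0)
  | n + 1 => ((histSeq F c0 n).1 ++ [(histSeq F c0 n).2],
      F (histSeq F c0 n).1 (histSeq F c0 n).2)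

noncomputable def playSeq (F : List C → C → C) (c0 : C) (n : ℕ) : C := (histSeq F c0 n).2

theorem histSeq_fst (F : List C → C → C) (c0 : C) (n : ℕ) :
    (histSeq F c0 n).1 = List.ofFn (fun j : Fin n => playSeq F c0 j) := by
  induction n with
  | zero => simp [histSeq]
  | succ n ih =>
      rw [List.ofFn_succ']
      show (histSeq F c0 n).1 ++ [(histSeq F c0 n).2] = _
      rw [ih, List.concat_eq_append]
      rfl

theorem playSeq_zero (F : List C → C → C) (c0 : C) : playSeq F c0 0 = c0 := rfl

theorem playSeq_succ (F : List C → C → C) (c0 : C) (n : ℕ) :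
    playSeq F c0 (n + 1) = F (List.ofFn fun j : Fin n => playSeq F c0 j) (playSeq F c0 n) := by
  show (histSeq F c0 (n + 1)).2 = _
  rw [show (histSeq F c0 (n + 1)).2 = F (histSeq F c0 n).1 (histSeq F c0 n).2 from rfl,
    histSeq_fst]
  rfl

end Generic

section EquivLemmas

universe u
variable {C : Type u} {H : SGame C} {pA pB : C → Prop} {c0 : C}

open Classical

theorem existsB_of_BAt (hDisj : ∀ c, ¬(pA c ∧ pB c)) {c : C} (hB : pB c)
    (hBAt : BAt H pA pB c) (hnf : ¬ H.final c) :
    ∃ c', H.step c c' ∧ BAt H pA pB c' ∧ rnk H pA pB c' < rnk H pA pB c := by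
  rcases hBAt.cases with hf | ⟨_, c', hs, h1, h2⟩ | ⟨hA, _⟩
  · exact absurd hf hnf
  · exact ⟨c', hs, h1, h2⟩
  · exact absurd ⟨hA, hB⟩ (hDisj c)

theorem existsA_of_not_BAt {c : C} (hA : pA c) (hn : ¬ BAt H pA pB c) :
    ∃ c', H.step c c' ∧ ¬ BAt H pA pB c' := by
  by_contra hno
  push_neg at hno
  exact hn (BAt_stepA hA fun c' hs => hno c' hs)

theorem allA_of_BAt (hDisj : ∀ c, ¬(pA c ∧ pB c)) {c : C} (hA : pA c)
    (hBAt : BAt H pA pB c) (hnf : ¬ H.final c) :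
    ∀ c', H.step c c' → BAt H pA pB c' ∧ rnk H pA pB c' < rnk H pA pB c := by
  rcases hBAt.cases with hf | ⟨hB, _⟩ | ⟨_, hall⟩
  · exact absurd hf hnf
  · exact absurd ⟨hA, hB⟩ (hDisj c)
  · exact hall

/-- E1 ⇐ : if `c0` is in the B-attractor, player B wins. -/
theorem winsB_of_BAt (hAlt : ∀ c c', H.step c c' → (pA c ∧ pB c') ∨ (pB c ∧ pA c'))
    (hDisj : ∀ c, ¬(pA c ∧ pB c)) (dfB : ∀ c, pB c → ∃ c', H.step c c')
    (h : BAt H pA pB c0) : H.Wins pB H.BWins c0 := by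
  refine ⟨fun _ c =>
    if hc : pB c ∧ BAt H pA pB c ∧ ¬ H.final c then
      (existsB_of_BAt hDisj hc.1 hc.2.1 hc.2.2).choose
    else if hs : ∃ c', H.step c c' then hs.choose else c, ?_, ?_⟩
  · intro hist c hB
    by_cases hc : pB c ∧ BAt H pA pB c ∧ ¬ H.final c
    · simp only [dif_pos hc]
      exact (existsB_of_BAt hDisj hc.1 hc.2.1 hc.2.2).choose_spec.1
    · simp only [dif_neg hc, dif_pos (dfB c hB)]
      exact (dfB c hB).choose_spec
  · intro ρ h0 hplay hcons
    by_contra hnw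
    have hnf : ∀ i, ¬ H.final (ρ i) := fun i hf => hnw ⟨i, hf⟩
    have hstep : ∀ i, BAt H pA pB (ρ i) →
        BAt H pA pB (ρ (i + 1)) ∧ rnk H pA pB (ρ (i + 1)) < rnk H pA pB (ρ i) := by
      intro i hi
      rcases hAlt _ _ (hplay i) with ⟨hA, _⟩ | ⟨hB, _⟩
      · exact allA_of_BAt hDisj hA hi (hnf i) _ (hplay i)
      · have hρ := hcons i hB
        simp only [dif_pos (show pB (ρ i) ∧ BAt H pA pB (ρ i) ∧ ¬ H.final (ρ i) from ⟨hB, hi, hnf i⟩)] at hρ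
        rw [hρ]
        exact (existsB_of_BAt hDisj hB hi (hnf i)).choose_spec.2
    have hB : ∀ i, BAt H pA pB (ρ i) := by
      intro i
      induction i with
      | zero => rw [h0]; exact h
      | succ n ih => exact (hstep n ih).1
    exact no_ordinal_descent (fun i => rnk H pA pB (ρ i)) fun i => (hstep i (hB i)).2

/-- E1 ⇒ (contrapositive): if `c0` is not in the B-attractor, B does not win. -/
theorem not_winsB_of_not_BAt
    (hAlt : ∀ c c', H.step c c' → (pA c ∧ pB c') ∨ (pB c ∧ pA c'))
    (hDisj : ∀ c, ¬(pA c ∧ pB c)) (hc0 : pA c0 ∨ pB c0)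
    (h : ¬ BAt H pA pB c0) : ¬ H.Wins pB H.BWins c0 := by
  rintro ⟨σ, hval, hwin⟩
  set F : List C → C → C := fun hist c =>
    if hB : pB c then σ hist c
    else if hs : ∃ c', H.step c c' ∧ ¬ BAt H pA pB c' then hs.choose
    else c with hF
  set ρ : ℕ → C := playSeq F c0 with hρdef
  have hnext : ∀ n, ¬ BAt H pA pB (ρ n) → (pA (ρ n) ∨ pB (ρ n)) →
      H.step (ρ n) (ρ (n + 1)) ∧ ¬ BAt H pA pB (ρ (n + 1)) ∧
        (pB (ρ n) → ρ (n + 1) = σ (List.ofFn fun j : Fin n => ρ j) (ρ n)) := by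
    intro n hn hown
    have hρs : ρ (n + 1) = F (List.ofFn fun j : Fin n => ρ j) (ρ n) := playSeq_succ F c0 n
    rcases hown with hA | hB
    · have hnB : ¬ pB (ρ n) := fun hc => hDisj _ ⟨hA, hc⟩
      have hex := existsA_of_not_BAt hA hn
      rw [hF] at hρs
      simp only [dif_neg hnB, dif_pos hex] at hρs
      rw [hρs]
      exact ⟨hex.choose_spec.1, hex.choose_spec.2, fun hc => absurd hc hnB⟩
    · rw [hF] at hρs
      simp only [dif_pos hB] at hρs
      refine ⟨hρs ▸ hval _ _ hB, ?_, fun _ => hρs⟩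
      intro hBAt
      exact hn (BAt_stepB hB (hρs ▸ hval _ _ hB) hBAt)
  have hinv : ∀ n, ¬ BAt H pA pB (ρ n) ∧ (pA (ρ n) ∨ pB (ρ n)) := by
    intro n
    induction n with
    | zero => exact ⟨h, hc0⟩
    | succ n ih =>
        obtain ⟨hs, hn, _⟩ := hnext n ih.1 ih.2
        rcases hAlt _ _ hs with ⟨_, h2⟩ | ⟨_, h2⟩
        · exact ⟨hn, Or.inr h2⟩
        · exact ⟨hn, Or.inl h2⟩
  have hplay : H.IsPlay ρ := fun i => (hnext i (hinv i).1 (hinv i).2).1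
  have hcons : SGame.Consistent pB σ ρ := fun i hB =>
    (hnext i (hinv i).1 (hinv i).2).2.2 hB
  obtain ⟨i, hf⟩ := hwin ρ rfl hplay hcons
  exact (hinv i).1 (BAt_of_final hf)

/-- E2 ⇐ : if `c0` is not in the B-attractor, player A wins. -/
theorem winsA_of_not_BAt
    (hAlt : ∀ c c', H.step c c' → (pA c ∧ pB c') ∨ (pB c ∧ pA c'))
    (dfA : ∀ c, pA c → ∃ c', H.step c c')
    (h : ¬ BAt H pA pB c0) : H.Wins pA (fun ρ => ¬ H.BWins ρ) c0 := by
  refine ⟨fun _ c =>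
    if hc : pA c ∧ ¬ BAt H pA pB c then (existsA_of_not_BAt hc.1 hc.2).choose
    else if hs : ∃ c', H.step c c' then hs.choose else c, ?_, ?_⟩
  · intro hist c hA
    by_cases hc : pA c ∧ ¬ BAt H pA pB c
    · simp only [dif_pos hc]
      exact (existsA_of_not_BAt hc.1 hc.2).choose_spec.1
    · simp only [dif_neg hc, dif_pos (dfA c hA)]
      exact (dfA c hA).choose_spec
  · intro ρ h0 hplay hcons
    have hinv : ∀ i, ¬ BAt H pA pB (ρ i) := by
      intro i
      induction i with
      | zero => rw [h0]; exact h
      | succ n ih =>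
          rcases hAlt _ _ (hplay n) with ⟨hA, _⟩ | ⟨hB, _⟩
          · have hρ := hcons n hA
            simp only [dif_pos (show pA (ρ n) ∧ ¬ BAt H pA pB (ρ n) from ⟨hA, ih⟩)] at hρ
            rw [hρ]
            exact (existsA_of_not_BAt hA ih).choose_spec.2
          · exact fun hBAt => ih (BAt_stepB hB (hplay n) hBAt)
    rintro ⟨i, hf⟩
    exact hinv i (BAt_of_final hf)

/-- E2 ⇒ (contrapositive): if `c0` is in the B-attractor, A does not win. -/
theorem not_winsA_of_BAt
    (hAlt : ∀ c c', H.step c c' → (pA c ∧ pB c') ∨ (pB c ∧ pA c'))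
    (hDisj : ∀ c, ¬(pA c ∧ pB c)) (dfB : ∀ c, pB c → ∃ c', H.step c c')
    (hc0 : pA c0 ∨ pB c0)
    (h : BAt H pA pB c0) : ¬ H.Wins pA (fun ρ => ¬ H.BWins ρ) c0 := by
  rintro ⟨σ, hval, hwin⟩
  set F : List C → C → C := fun hist c =>
    if hA : pA c then σ hist c
    else if hx : ∃ c', H.step c c' ∧ BAt H pA pB c' ∧ rnk H pA pB c' < rnk H pA pB c then
      hx.choose
    else if hs : ∃ c', H.step c c' then hs.choose else c with hF
  set ρ : ℕ → C := playSeq F c0 with hρdef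
  have hnext : ∀ n, (pA (ρ n) ∨ pB (ρ n)) →
      H.step (ρ n) (ρ (n + 1)) ∧
        (pA (ρ n) → ρ (n + 1) = σ (List.ofFn fun j : Fin n => ρ j) (ρ n)) := by
    intro n hown
    have hρs : ρ (n + 1) = F (List.ofFn fun j : Fin n => ρ j) (ρ n) := playSeq_succ F c0 n
    rcases hown with hA | hB
    · rw [hF] at hρs
      simp only [dif_pos hA] at hρs
      exact ⟨hρs ▸ hval _ _ hA, fun _ => hρs⟩
    · have hnA : ¬ pA (ρ n) := fun hc => hDisj _ ⟨hc, hB⟩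
      rw [hF] at hρs
      simp only [dif_neg hnA] at hρs
      refine ⟨?_, fun hc => absurd hc hnA⟩
      by_cases hx : ∃ c', H.step (ρ n) c' ∧ BAt H pA pB c' ∧
          rnk H pA pB c' < rnk H pA pB (ρ n)
      · rw [dif_pos hx] at hρs
        exact hρs ▸ hx.choose_spec.1
      · rw [dif_neg hx, dif_pos (dfB _ hB)] at hρs
        exact hρs ▸ (dfB _ hB).choose_spec
  have hown : ∀ n, pA (ρ n) ∨ pB (ρ n) := by
    intro n
    induction n with
    | zero => exact hc0
    | succ n ih =>
        rcases hAlt _ _ (hnext n ih).1 with ⟨_, h2⟩ | ⟨_, h2⟩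
        · exact Or.inr h2
        · exact Or.inl h2
  have hplay : H.IsPlay ρ := fun i => (hnext i (hown i)).1
  have hcons : SGame.Consistent pA σ ρ := fun i hA => (hnext i (hown i)).2 hA
  have hnb := hwin ρ rfl hplay hcons
  have hnf : ∀ i, ¬ H.final (ρ i) := fun i hf => hnb ⟨i, hf⟩
  have hstep2 : ∀ n, BAt H pA pB (ρ n) →
      BAt H pA pB (ρ (n + 1)) ∧ rnk H pA pB (ρ (n + 1)) < rnk H pA pB (ρ n) := by
    intro n hn
    rcases hown n with hA | hB
    · exact allA_of_BAt hDisj hA hn (hnf n) _ (hplay n)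
    · have hnA : ¬ pA (ρ n) := fun hc => hDisj _ ⟨hc, hB⟩
      have hx := existsB_of_BAt hDisj hB hn (hnf n)
      have hρs : ρ (n + 1) = F (List.ofFn fun j : Fin n => ρ j) (ρ n) := playSeq_succ F c0 n
      rw [hF] at hρs
      simp only [dif_neg hnA, dif_pos hx] at hρs
      rw [hρs]
      exact ⟨hx.choose_spec.2.1, hx.choose_spec.2.2⟩
  have hBAll : ∀ n, BAt H pA pB (ρ n) := by
    intro n
    induction n with
    | zero => exact h
    | succ n ih => exact (hstep2 n ih).1
  exact no_ordinal_descent (fun i => rnk H pA pB (ρ i)) fun i => (hstep2 i (hBAll i)).2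

end EquivLemmas

section TSOLemmas

variable {I S X V : Type} [DecidableEq I] [DecidableEq X] [Fintype I]

theorem UpdStep.st_eq {c c' : Conf I S X V} (h : UpdStep c c') : c'.st = c.st := by
  cases h; rfl

theorem Upds.st_eq {c c' : Conf I S X V} (h : Upds c c') : c'.st = c.st := by
  induction h with
  | refl => rfl
  | tail _ h ih => rw [h.st_eq, ih]

theorem sum_update_length (bufs : I → List (X × V)) (ι : I) (l : List (X × V)) :
    (∑ κ, (Function.update bufs ι l κ).length) + (bufs ι).length
      = (∑ κ, (bufs κ).length) + l.length := by
  have h1 : ∑ κ ∈ Finset.univ.erase ι, (Function.update bufs ι l κ).length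
      = ∑ κ ∈ Finset.univ.erase ι, (bufs κ).length :=
    Finset.sum_congr rfl fun κ hκ => by
      rw [Function.update_of_ne (Finset.ne_of_mem_erase hκ)]
  rw [← Finset.add_sum_erase _ _ (Finset.mem_univ ι),
    ← Finset.add_sum_erase _ (fun κ => (bufs κ).length) (Finset.mem_univ ι), h1,
    Function.update_self]
  omega

theorem UpdStep.totalBuf_eq {c c' : Conf I S X V} (h : UpdStep c c') :
    totalBuf c = totalBuf c' + 1 := by
  cases h with
  | mk ι x v w hw =>
    have h2 := sum_update_length c.buf ι w
    rw [hw] at h2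
    show (∑ κ, (c.buf κ).length) = (∑ κ, (Function.update c.buf ι w κ).length) + 1
    simp only [List.length_append, List.length_cons, List.length_nil] at h2
    omega

theorem Upds.totalBuf_le {c c' : Conf I S X V} (h : Upds c c') :
    totalBuf c' ≤ totalBuf c := by
  induction h with
  | refl => exact le_refl _
  | tail _ h ih => have := h.totalBuf_eq; omega

theorem exists_concat_buf {c : Conf I S X V} (h : 1 ≤ totalBuf c) :
    ∃ κ l x v, c.buf κ = l ++ [(x, v)] := by
  have hex : ∃ κ : I, c.buf κ ≠ [] := by
    by_contra hno
    push_neg at hno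
    have h0 : totalBuf c = 0 := Finset.sum_eq_zero (fun κ _ => by rw [hno κ]; rfl)
    omega
  obtain ⟨κ, hκ⟩ := hex
  rcases List.eq_nil_or_concat (c.buf κ) with h0 | ⟨l, m, hm⟩
  · exact absurd h0 hκ
  · exact ⟨κ, l, m.1, m.2, by rw [hm, List.concat_eq_append]⟩

variable {P : Program I S X V}

theorem move_iff {c c' : Conf I S X V} :
    Move P (true, false) c c' ↔ ∃ c1, Upds c c1 ∧ ∃ ι instr, InstrStep P ι instr c1 c' := by
  constructor
  · rintro ⟨c1, c2, h1, h2, h3⟩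
    have h1' : Upds c c1 := by simpa [OptUpds] using h1
    have h3' : c' = c2 := by simpa [OptUpds] using h3
    exact ⟨c1, h1', h3' ▸ h2⟩
  · rintro ⟨c1, h1, hi⟩
    exact ⟨c1, c', by simpa [OptUpds] using h1, hi, by simp [OptUpds]⟩

theorem move_of_upds_move {c d e : Conf I S X V} (h : Upds c d)
    (hm : Move P (true, false) d e) : Move P (true, false) c e := by
  rw [move_iff] at hm ⊢
  obtain ⟨c1, h1, hi⟩ := hm
  exact ⟨c1, h.trans h1, hi⟩

theorem exists_flush_aux :
    ∀ n (c : Conf I S X V), totalBuf c ≤ n → ∃ d, Upds c d ∧ totalBuf d = 0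
  | 0, c, h => ⟨c, Relation.ReflTransGen.refl, Nat.le_zero.mp h⟩
  | n + 1, c, h => by
      by_cases h0 : totalBuf c = 0
      · exact ⟨c, Relation.ReflTransGen.refl, h0⟩
      · obtain ⟨κ, l, x, v, hκ⟩ := exists_concat_buf (c := c) (by omega)
        have hstep : UpdStep c
            (⟨c.st, Function.update c.buf κ l, Function.update c.mem x v⟩ : Conf I S X V) :=
          UpdStep.mk c κ x v l hκ
        have h2 := hstep.totalBuf_eq
        obtain ⟨d, hd, hd0⟩ := exists_flush_aux n
          (⟨c.st, Function.update c.buf κ l, Function.update c.mem x v⟩ : Conf I S X V)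
          (by omega)
        exact ⟨d, Relation.ReflTransGen.head hstep hd, hd0⟩

theorem exists_flush (c : Conf I S X V) : ∃ d, Upds c d ∧ totalBuf d = 0 :=
  exists_flush_aux (totalBuf c) c le_rfl

theorem totalBuf_write (c : Conf I S X V) (ι : I) (x : X) (v : V) (st' : I → S)
    (mem' : X → V) :
    totalBuf (⟨st', Function.update c.buf ι ((x, v) :: c.buf ι), mem'⟩ : Conf I S X V)
      = totalBuf c + 1 := by
  have h2 := sum_update_length c.buf ι ((x, v) :: c.buf ι)
  show (∑ κ, (Function.update c.buf ι ((x, v) :: c.buf ι) κ).length)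
      = (∑ κ, (c.buf κ).length) + 1
  simp only [List.length_cons] at h2
  omega

theorem instrStep_cases {ι : I} {instr : Instr X V} {c c' : Conf I S X V}
    (h : InstrStep P ι instr c c') :
    c'.buf = c.buf ∨
      ∃ x v s', instr = Instr.write x v ∧ P.delta ι (c.st ι) (Instr.write x v) s' ∧
        c' = ⟨Function.update c.st ι s',
          Function.update c.buf ι ((x, v) :: c.buf ι), c.mem⟩ := by
  cases h with
  | read x v s' heq hd hr => exact Or.inl rfl
  | skip s' heq hd => exact Or.inl rfl
  | fence s' heq hd hb => exact Or.inl rfl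
  | write x v s' heq hd => exact Or.inr ⟨x, v, s', heq, hd, rfl⟩

theorem totalBuf_congr_buf {c c' : Conf I S X V} (h : c'.buf = c.buf) :
    totalBuf c' = totalBuf c := by
  show (∑ κ, (c'.buf κ).length) = ∑ κ, (c.buf κ).length
  rw [h]

theorem move_shrink {N : ℕ} (hN : 1 ≤ N) {c c' : Conf I S X V}
    (hc : totalBuf c ≤ N) (hm : Move P (true, false) c c') (hc' : N < totalBuf c') :
    ∃ c'', Move P (true, false) c c'' ∧ UpdStep c' c'' ∧ totalBuf c'' ≤ N := by
  rw [move_iff] at hm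
  obtain ⟨c1, hu, ι, instr, hi⟩ := hm
  have h1 : totalBuf c1 ≤ N := hu.totalBuf_le.trans hc
  rcases instrStep_cases hi with hbuf | ⟨x, v, s', heq, hd, hc'eq⟩
  · exact absurd hc' (by rw [totalBuf_congr_buf hbuf]; omega)
  · subst hc'eq
    have hup : totalBuf (⟨Function.update c1.st ι s',
        Function.update c1.buf ι ((x, v) :: c1.buf ι), c1.mem⟩ : Conf I S X V)
        = totalBuf c1 + 1 := totalBuf_write c1 ι x v _ _
    have h1N : 1 ≤ totalBuf c1 := by omega
    obtain ⟨κ, l, y, w, hκ⟩ := exists_concat_buf h1N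
    have hupd1 : UpdStep c1
        (⟨c1.st, Function.update c1.buf κ l, Function.update c1.mem y w⟩ : Conf I S X V) :=
      UpdStep.mk c1 κ y w l hκ
    have hi' : InstrStep P ι instr
        (⟨c1.st, Function.update c1.buf κ l, Function.update c1.mem y w⟩ : Conf I S X V)
        ⟨Function.update c1.st ι s',
          Function.update (Function.update c1.buf κ l) ι
            ((x, v) :: Function.update c1.buf κ l ι),
          Function.update c1.mem y w⟩ :=
      InstrStep.write _ x v s' heq hd
    refine ⟨_, move_iff.2 ⟨_, hu.tail hupd1, ι, instr, hi'⟩, ?_, ?_⟩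
    · by_cases hκι : κ = ι
      · subst hκι
        have hb : (⟨Function.update c1.st κ s',
            Function.update c1.buf κ ((x, v) :: c1.buf κ), c1.mem⟩ : Conf I S X V).buf κ
            = ((x, v) :: l) ++ [(y, w)] := by
          simp [hκ]
        have h0 := UpdStep.mk _ κ y w ((x, v) :: l) hb
        have hEq : (⟨(⟨Function.update c1.st κ s',
              Function.update c1.buf κ ((x, v) :: c1.buf κ), c1.mem⟩ : Conf I S X V).st,
            Function.update (⟨Function.update c1.st κ s',
              Function.update c1.buf κ ((x, v) :: c1.buf κ), c1.mem⟩ : Conf I S X V).buf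
              κ ((x, v) :: l),
            Function.update (⟨Function.update c1.st κ s',
              Function.update c1.buf κ ((x, v) :: c1.buf κ), c1.mem⟩ : Conf I S X V).mem
              y w⟩ : Conf I S X V)
            = ⟨Function.update c1.st κ s',
              Function.update (Function.update c1.buf κ l) κ
                ((x, v) :: Function.update c1.buf κ l κ),
              Function.update c1.mem y w⟩ := by
          simp [Conf.mk.injEq, Function.update_idem, Function.update_self]
        exact hEq ▸ h0
      · have hb : (⟨Function.update c1.st ι s',
            Function.update c1.buf ι ((x, v) :: c1.buf ι), c1.mem⟩ : Conf I S X V).buf κ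
            = l ++ [(y, w)] := by
          simp only []
          rw [Function.update_of_ne hκι, hκ]
        have h0 := UpdStep.mk _ κ y w l hb
        have hEq : (⟨(⟨Function.update c1.st ι s',
              Function.update c1.buf ι ((x, v) :: c1.buf ι), c1.mem⟩ : Conf I S X V).st,
            Function.update (⟨Function.update c1.st ι s',
              Function.update c1.buf ι ((x, v) :: c1.buf ι), c1.mem⟩ : Conf I S X V).buf
              κ l,
            Function.update (⟨Function.update c1.st ι s',
              Function.update c1.buf ι ((x, v) :: c1.buf ι), c1.mem⟩ : Conf I S X V).mem
              y w⟩ : Conf I S X V)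
            = ⟨Function.update c1.st ι s',
              Function.update (Function.update c1.buf κ l) ι
                ((x, v) :: Function.update c1.buf κ l ι),
              Function.update c1.mem y w⟩ := by
          simp only [Conf.mk.injEq, Function.update_of_ne (Ne.symm hκι),
            Function.update_comm hκι, and_true, true_and]
        exact hEq ▸ h0
    · have h3 := hupd1.totalBuf_eq
      have h4 : totalBuf (⟨Function.update c1.st ι s',
          Function.update (Function.update c1.buf κ l) ι
            ((x, v) :: Function.update c1.buf κ l ι),
          Function.update c1.mem y w⟩ : Conf I S X V)
          = totalBuf (⟨c1.st, Function.update c1.buf κ l,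
              Function.update c1.mem y w⟩ : Conf I S X V) + 1 :=
        totalBuf_write
          (⟨c1.st, Function.update c1.buf κ l, Function.update c1.mem y w⟩ : Conf I S X V)
          ι x v (Function.update c1.st ι s') (Function.update c1.mem y w)
      omega

theorem move_bounded {N : ℕ} (hN : 1 ≤ N) {c : Conf I S X V}
    (hc : totalBuf c ≤ N) (hm : ∃ c', Move P (true, false) c c') :
    ∃ c'', Move P (true, false) c c'' ∧ totalBuf c'' ≤ N := by
  obtain ⟨c', hm⟩ := hm
  by_cases hle : totalBuf c' ≤ N
  · exact ⟨c', hm, hle⟩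
  · obtain ⟨c'', h1, _, h3⟩ := move_shrink hN hc hm (lt_of_not_ge hle)
    exact ⟨c'', h1, h3⟩

end TSOLemmas

section GameLemmas

variable {I S X V : Type} [DecidableEq I] [DecidableEq X] [Fintype I]
variable {P : Program I S X V} {SF : Set S}

theorem tso_step_iff {a b : Conf I S X V × Bool} :
    (tsoGame P (true, false) (true, false) SF).step a b ↔
      b.2 = !a.2 ∧ Move P (true, false) a.1 b.1 := by
  obtain ⟨a1, a2⟩ := a
  obtain ⟨b1, b2⟩ := b
  show ((a2 = true ∧ b2 = false ∧ _) ∨ (a2 = false ∧ b2 = true ∧ _)) ↔ _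
  cases a2 <;> cases b2 <;> simp

theorem attrAt_upds {x y : Conf I S X V} (hu : Upds x y) {o : Ordinal}
    (h : attrAt (tsoGame P (true, false) (true, false) SF)
      (ownOf true) (ownOf false) o (x, true)) :
    attrAt (tsoGame P (true, false) (true, false) SF)
      (ownOf true) (ownOf false) o (y, true) := by
  rw [attrAt_iff] at h ⊢
  rcases h with hf | ⟨hB, _⟩ | ⟨_, hall⟩
  · obtain ⟨-, ι, hι⟩ := hf
    exact Or.inl ⟨rfl, ι, by rw [show (y, true).1.st = x.st from hu.st_eq]; exact hι⟩
  · exact absurd hB (by simp [ownOf])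
  · refine Or.inr (Or.inr ⟨rfl, fun c' hs => hall c' ?_⟩)
    rw [tso_step_iff] at hs ⊢
    exact ⟨hs.1, move_of_upds_move hu hs.2⟩

theorem BAt_upds_false {x y : Conf I S X V} (hu : Upds x y)
    (h : BAt (tsoGame P (true, false) (true, false) SF)
      (ownOf true) (ownOf false) (y, false)) :
    BAt (tsoGame P (true, false) (true, false) SF)
      (ownOf true) (ownOf false) (x, false) := by
  obtain ⟨o, ho⟩ := h
  rw [attrAt_iff] at ho
  rcases ho with hf | ⟨hB, c', hs, o', ho', ha⟩ | ⟨hA, _⟩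
  · exact absurd hf.1 (by simp)
  · refine BAt_stepB rfl ?_ ⟨o', ha⟩
    rw [tso_step_iff] at hs ⊢
    exact ⟨hs.1, move_of_upds_move hu hs.2⟩
  · exact absurd hA (by simp [ownOf])

end GameLemmas

section Core

variable {I S X V : Type} [DecidableEq I] [DecidableEq X] [Fintype I]
variable {P : Program I S X V} {SF : Set S} {N : ℕ}

theorem core1 (hN : 1 ≤ N) (o : Ordinal) :
    ∀ c : Conf I S X V × Bool,
      attrAt (tsoGame P (true, false) (true, false) SF) (ownOf true) (ownOf false) o c →
      totalBuf c.1 ≤ N →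
      BAt (restrictGame (tsoGame P (true, false) (true, false) SF)
          {c : Conf I S X V × Bool | totalBuf c.1 ≤ N})
        (fun c => c.2 = true ∧ totalBuf c.1 ≤ N)
        (fun c => c.2 = false ∧ totalBuf c.1 ≤ N) c := by
  induction o using Ordinal.induction with
  | h o IH =>
    intro c hc hcD
    rw [attrAt_iff] at hc
    rcases hc with hf | ⟨hB, c', hs, o', ho', ha⟩ | ⟨hA, hall⟩
    · exact BAt_of_final ⟨hf, hcD⟩
    · rw [tso_step_iff] at hs
      have hB' : c.2 = false := hB
      have hflag : c'.2 = true := by simp [hs.1, hB']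
      by_cases hD' : totalBuf c'.1 ≤ N
      · refine BAt_stepB ⟨hB', hcD⟩ ?_ (IH o' ho' c' ha hD')
        exact ⟨tso_step_iff.2 hs, hcD, hD'⟩
      · obtain ⟨c''1, hm2, hupd, hle⟩ := move_shrink hN hcD hs.2 (lt_of_not_ge hD')
        have hc'eq : (c'.1, true) = c' := by rw [← hflag]
        have ha2 : attrAt (tsoGame P (true, false) (true, false) SF)
            (ownOf true) (ownOf false) o' (c''1, true) :=
          attrAt_upds (Relation.ReflTransGen.single hupd) (by rw [hc'eq]; exact ha)
        refine BAt_stepB ⟨hB', hcD⟩ ?_ (IH o' ho' (c''1, true) ha2 hle)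
        refine ⟨tso_step_iff.2 ⟨?_, hm2⟩, hcD, hle⟩
        simp [hB']
    · refine BAt_stepA ⟨hA, hcD⟩ ?_
      rintro c' ⟨hs, _, hD'⟩
      obtain ⟨o', ho', ha⟩ := hall c' hs
      exact IH o' ho' c' ha hD'

theorem core2 (hN : 1 ≤ N) (o : Ordinal) :
    ∀ c : Conf I S X V × Bool,
      attrAt (restrictGame (tsoGame P (true, false) (true, false) SF)
          {c : Conf I S X V × Bool | totalBuf c.1 ≤ N})
        (fun c => c.2 = true ∧ totalBuf c.1 ≤ N)
        (fun c => c.2 = false ∧ totalBuf c.1 ≤ N) o c →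
      BAt (tsoGame P (true, false) (true, false) SF) (ownOf true) (ownOf false) c := by
  induction o using Ordinal.induction with
  | h o IH =>
    intro c hc
    rw [attrAt_iff] at hc
    rcases hc with hf | ⟨⟨hB, hcD⟩, c', hs, o', ho', ha⟩ | ⟨⟨hA, hcD⟩, hall⟩
    · exact BAt_of_final hf.1
    · exact BAt_stepB hB hs.1 (IH o' ho' c' ha)
    · refine BAt_stepA hA ?_
      intro c' hs
      rw [tso_step_iff] at hs
      have hflag : c'.2 = false := by simp [hs.1, hA]
      by_cases hD' : totalBuf c'.1 ≤ N
      · obtain ⟨o', ho', ha⟩ := hall c' ⟨tso_step_iff.2 hs, hcD, hD'⟩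
        exact IH o' ho' c' ha
      · obtain ⟨c''1, hm2, hupd, hle⟩ := move_shrink hN hcD hs.2 (lt_of_not_ge hD')
        obtain ⟨o', ho', ha⟩ := hall (c''1, false)
          ⟨tso_step_iff.2 ⟨by simp [hA], hm2⟩, hcD, hle⟩
        have hBAt'' := IH o' ho' _ ha
        have hc'eq : (c'.1, false) = c' := by rw [← hflag]
        rw [← hc'eq]
        exact BAt_upds_false (Relation.ReflTransGen.single hupd) hBAt''

end Core

/-- Group II: for each player, `c0` is winning for that player in `G` if and only if
`c0` is winning for that player in the finite game `G'` restricted to configurations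
with at most `max 1 |B(c0)|` buffered messages. -/
theorem statement10 {I S X V : Type} [DecidableEq I] [DecidableEq X] [Fintype I]
    (P : Program I S X V) (SF : Set S)
    (G : SGame (Conf I S X V × Bool))
    (hG : G = tsoGame P (true, false) (true, false) SF)
    (c0 : Conf I S X V × Bool)
    (D : Set (Conf I S X V × Bool))
    (hD : D = {c | totalBuf c.1 ≤ max 1 (totalBuf c0.1)})
    (G' : SGame (Conf I S X V × Bool)) (hG' : G' = restrictGame G D) :
    ∀ p : Bool,
      (G.Wins (ownOf p) (winPlayOf G p) c0 ↔
        G'.Wins (fun c => c.2 = p ∧ c ∈ D) (winPlayOf G' p) c0) := by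
  subst hG
  subst hD
  subst hG'
  intro p
  set N := max 1 (totalBuf c0.1) with hNdef
  have hN : 1 ≤ N := le_max_left _ _
  have hc0D : totalBuf c0.1 ≤ N := le_max_right _ _
  by_cases hall : ∀ c : Conf I S X V, ∃ c', Move P (true, false) c c'
  · have hAltG : ∀ a b : Conf I S X V × Bool,
        (tsoGame P (true, false) (true, false) SF).step a b →
        (ownOf true a ∧ ownOf false b) ∨ (ownOf false a ∧ ownOf true b) := by
      intro a b hs
      rw [tso_step_iff] at hs
      cases ha : a.2
      · exact Or.inr ⟨ha, by show _ = _; simp [hs.1, ha]⟩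
      · exact Or.inl ⟨ha, by show _ = _; simp [hs.1, ha]⟩
    have hDisjG : ∀ a : Conf I S X V × Bool, ¬ (ownOf true a ∧ ownOf false a) := by
      rintro a ⟨h1, h2⟩
      have : (true : Bool) = false := h1 ▸ h2
      simp at this
    have hdfG : ∀ a : Conf I S X V × Bool,
        ∃ a', (tsoGame P (true, false) (true, false) SF).step a a' := by
      intro a
      obtain ⟨m, hm⟩ := hall a.1
      exact ⟨(m, !a.2), tso_step_iff.2 ⟨rfl, hm⟩⟩
    have hc0G : ownOf true c0 ∨ ownOf false c0 := by
      rcases Bool.eq_false_or_eq_true c0.2 with h | h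
      · exact Or.inl h
      · exact Or.inr h
    have hAltG' : ∀ a b : Conf I S X V × Bool,
        (restrictGame (tsoGame P (true, false) (true, false) SF)
          {c : Conf I S X V × Bool | totalBuf c.1 ≤ N}).step a b →
        ((fun c : Conf I S X V × Bool => c.2 = true ∧
            c ∈ {c : Conf I S X V × Bool | totalBuf c.1 ≤ N}) a ∧
          (fun c : Conf I S X V × Bool => c.2 = false ∧
            c ∈ {c : Conf I S X V × Bool | totalBuf c.1 ≤ N}) b) ∨
        ((fun c : Conf I S X V × Bool => c.2 = false ∧
            c ∈ {c : Conf I S X V × Bool | totalBuf c.1 ≤ N}) a ∧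
          (fun c : Conf I S X V × Bool => c.2 = true ∧
            c ∈ {c : Conf I S X V × Bool | totalBuf c.1 ≤ N}) b) := by
      rintro a b ⟨hs, haD, hbD⟩
      rw [tso_step_iff] at hs
      cases ha : a.2
      · exact Or.inr ⟨⟨ha, haD⟩, ⟨by simp [hs.1, ha], hbD⟩⟩
      · exact Or.inl ⟨⟨ha, haD⟩, ⟨by simp [hs.1, ha], hbD⟩⟩
    have hDisjG' : ∀ a : Conf I S X V × Bool,
        ¬ ((a.2 = true ∧ a ∈ {c : Conf I S X V × Bool | totalBuf c.1 ≤ N}) ∧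
          (a.2 = false ∧ a ∈ {c : Conf I S X V × Bool | totalBuf c.1 ≤ N})) := by
      rintro a ⟨⟨h1, -⟩, ⟨h2, -⟩⟩
      have : (true : Bool) = false := h1 ▸ h2
      simp at this
    have hdfG' : ∀ a : Conf I S X V × Bool,
        a ∈ {c : Conf I S X V × Bool | totalBuf c.1 ≤ N} →
        ∃ a', (restrictGame (tsoGame P (true, false) (true, false) SF)
          {c : Conf I S X V × Bool | totalBuf c.1 ≤ N}).step a a' := by
      intro a haD
      obtain ⟨m, hm, hmle⟩ := move_bounded hN haD (hall a.1)
      exact ⟨(m, !a.2), ⟨tso_step_iff.2 ⟨rfl, hm⟩, haD, hmle⟩⟩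
    have hcore : BAt (tsoGame P (true, false) (true, false) SF)
        (ownOf true) (ownOf false) c0 ↔
        BAt (restrictGame (tsoGame P (true, false) (true, false) SF)
            {c : Conf I S X V × Bool | totalBuf c.1 ≤ N})
          (fun c => c.2 = true ∧ c ∈ {c : Conf I S X V × Bool | totalBuf c.1 ≤ N})
          (fun c => c.2 = false ∧ c ∈ {c : Conf I S X V × Bool | totalBuf c.1 ≤ N}) c0 := by
      constructor
      · rintro ⟨o, ho⟩
        exact core1 hN o c0 ho hc0D
      · rintro ⟨o, ho⟩
        exact core2 hN o c0 ho
    cases p with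
    | false =>
        have hwp1 : winPlayOf (tsoGame P (true, false) (true, false) SF) false
            = (tsoGame P (true, false) (true, false) SF).BWins := by
          funext ρ; simp [winPlayOf]
        have hwp2 : winPlayOf (restrictGame (tsoGame P (true, false) (true, false) SF)
              {c : Conf I S X V × Bool | totalBuf c.1 ≤ N}) false
            = (restrictGame (tsoGame P (true, false) (true, false) SF)
              {c : Conf I S X V × Bool | totalBuf c.1 ≤ N}).BWins := by
          funext ρ; simp [winPlayOf]
        rw [hwp1, hwp2]
        constructor
        · intro hw
          have hBAt : BAt (tsoGame P (true, false) (true, false) SF)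
              (ownOf true) (ownOf false) c0 := by
            by_contra hn
            exact not_winsB_of_not_BAt hAltG hDisjG hc0G hn hw
          exact winsB_of_BAt hAltG' hDisjG' (fun a ha => hdfG' a ha.2) (hcore.1 hBAt)
        · intro hw
          have hc0G' : (c0.2 = true ∧ c0 ∈ {c : Conf I S X V × Bool | totalBuf c.1 ≤ N}) ∨
              (c0.2 = false ∧ c0 ∈ {c : Conf I S X V × Bool | totalBuf c.1 ≤ N}) := by
            rcases Bool.eq_false_or_eq_true c0.2 with h | h
            · exact Or.inl ⟨h, hc0D⟩
            · exact Or.inr ⟨h, hc0D⟩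
          have hBAt' : BAt (restrictGame (tsoGame P (true, false) (true, false) SF)
                {c : Conf I S X V × Bool | totalBuf c.1 ≤ N})
              (fun c => c.2 = true ∧ c ∈ {c : Conf I S X V × Bool | totalBuf c.1 ≤ N})
              (fun c => c.2 = false ∧ c ∈ {c : Conf I S X V × Bool | totalBuf c.1 ≤ N})
              c0 := by
            by_contra hn
            exact not_winsB_of_not_BAt hAltG' hDisjG' hc0G' hn hw
          exact winsB_of_BAt hAltG hDisjG (fun a _ => hdfG a) (hcore.2 hBAt')
    | true =>
        have hwp1 : winPlayOf (tsoGame P (true, false) (true, false) SF) true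
            = fun ρ => ¬ (tsoGame P (true, false) (true, false) SF).BWins ρ := by
          funext ρ; simp [winPlayOf]
        have hwp2 : winPlayOf (restrictGame (tsoGame P (true, false) (true, false) SF)
              {c : Conf I S X V × Bool | totalBuf c.1 ≤ N}) true
            = fun ρ => ¬ (restrictGame (tsoGame P (true, false) (true, false) SF)
              {c : Conf I S X V × Bool | totalBuf c.1 ≤ N}).BWins ρ := by
          funext ρ; simp [winPlayOf]
        have hc0G' : (c0.2 = true ∧ c0 ∈ {c : Conf I S X V × Bool | totalBuf c.1 ≤ N}) ∨
            (c0.2 = false ∧ c0 ∈ {c : Conf I S X V × Bool | totalBuf c.1 ≤ N}) := by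
          rcases Bool.eq_false_or_eq_true c0.2 with h | h
          · exact Or.inl ⟨h, hc0D⟩
          · exact Or.inr ⟨h, hc0D⟩
        rw [hwp1, hwp2]
        constructor
        · intro hw
          have hn : ¬ BAt (tsoGame P (true, false) (true, false) SF)
              (ownOf true) (ownOf false) c0 := fun h =>
            not_winsA_of_BAt hAltG hDisjG (fun a _ => hdfG a) hc0G h hw
          exact winsA_of_not_BAt hAltG' (fun a ha => hdfG' a ha.2)
            (fun h => hn (hcore.2 h))
        · intro hw
          have hn' : ¬ BAt (restrictGame (tsoGame P (true, false) (true, false) SF)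
                {c : Conf I S X V × Bool | totalBuf c.1 ≤ N})
              (fun c => c.2 = true ∧ c ∈ {c : Conf I S X V × Bool | totalBuf c.1 ≤ N})
              (fun c => c.2 = false ∧ c ∈ {c : Conf I S X V × Bool | totalBuf c.1 ≤ N})
              c0 := fun h =>
            not_winsA_of_BAt hAltG' hDisjG' (fun a ha => hdfG' a ha.2) hc0G' h hw
          exact winsA_of_not_BAt hAltG (fun a _ => hdfG a) (fun h => hn' (hcore.1 h))
  · push_neg at hall
    obtain ⟨cd, hdead⟩ := hall
    obtain ⟨d, hud, hd0⟩ := exists_flush cd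
    apply iff_of_false
    · rintro ⟨σ, hval, -⟩
      have hs := hval [] (cd, p) rfl
      rw [tso_step_iff] at hs
      exact hdead _ hs.2
    · rintro ⟨σ, hval, -⟩
      obtain ⟨hs1, -, -⟩ := hval [] (d, p) ⟨rfl, show totalBuf d ≤ N by omega⟩
      rw [tso_step_iff] at hs1
      exact hdead _ (move_of_upds_move hud hs1.2)

end TSOGames
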